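/- Fix μ₁ < μ₂ ∈ ℝ, π ∈ (0,1) and δ > 0. Writing p_σ(x) = π φ_{μ₁,σ}(x) + (1−π) φ_{μ₂,σ}(x) and q_σ(x) = φ_{μ₁,σ}(x), the score of the mixture converges to the score of the left component uniformly on the half-line left of the midpoint: sup { |s_{p_σ}(x) − s_{q_σ}(x)| : x ≤ (μ₁+μ₂)/2 − δ } → 0 as σ → 0⁺. -/

import Mathlib

open MeasureTheory Filter

/-- Gaussian density with mean `μ` and standard deviation `σ`. -/
noncomputable def gaussian (μ σ : ℝ) (x : ℝ) : ℝ :=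
  (σ * Real.sqrt (2 * Real.pi))⁻¹ * Real.exp (-(x - μ) ^ 2 / (2 * σ ^ 2))

/-- The score of a density `ρ`: the derivative of its log. -/
noncomputable def score (ρ : ℝ → ℝ) (x : ℝ) : ℝ :=
  deriv (fun y => Real.log (ρ y)) x

/-- Fisher divergence between densities `q` and `p`. -/
noncomputable def fisherDiv (q p : ℝ → ℝ) : ℝ :=
  ∫ x : ℝ, q x * (score q x - score p x) ^ 2

lemma gaussian_pos {σ : ℝ} (hσ : 0 < σ) (μ x : ℝ) : 0 < gaussian μ σ x := by
  unfold gaussian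
  have : 0 < Real.sqrt (2 * Real.pi) := Real.sqrt_pos.2 (by positivity)
  positivity

lemma gaussian_hasDerivAt {σ : ℝ} (hσ : 0 < σ) (μ x : ℝ) :
    HasDerivAt (gaussian μ σ) (gaussian μ σ x * (-(x - μ) / σ ^ 2)) x := by
  have hg : HasDerivAt (fun y : ℝ => -(y - μ) ^ 2 / (2 * σ ^ 2)) (-(x - μ) / σ ^ 2) x := by
    have h1 : HasDerivAt (fun y : ℝ => (y - μ) ^ 2) (2 * (x - μ)) x := by
      simpa using ((hasDerivAt_id x).sub_const μ).fun_pow 2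
    have h2 := h1.neg.div_const (2 * σ ^ 2)
    exact h2.congr_deriv (by rw [div_eq_div_iff (by positivity) (by positivity)]; ring)
  have h3 := (hg.exp).const_mul ((σ * Real.sqrt (2 * Real.pi))⁻¹)
  unfold gaussian
  exact h3.congr_deriv (by ring)

lemma score_gaussian {σ : ℝ} (hσ : 0 < σ) (μ x : ℝ) :
    score (fun y => gaussian μ σ y) x = -(x - μ) / σ ^ 2 := by
  have h := gaussian_hasDerivAt hσ μ x
  have hpos := gaussian_pos hσ μ x
  have hd := (h.log hpos.ne').deriv
  rw [score, hd, mul_div_assoc, mul_comm]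
  field_simp

lemma score_mix {σ : ℝ} (hσ : 0 < σ) (μ₁ μ₂ w : ℝ) (x : ℝ) (hw0 : 0 < w) (hw1 : w < 1) :
    score (fun y => w * gaussian μ₁ σ y + (1 - w) * gaussian μ₂ σ y) x =
      (w * (gaussian μ₁ σ x * (-(x - μ₁) / σ ^ 2))
        + (1 - w) * (gaussian μ₂ σ x * (-(x - μ₂) / σ ^ 2))) /
      (w * gaussian μ₁ σ x + (1 - w) * gaussian μ₂ σ x) := by
  have h1 := (gaussian_hasDerivAt hσ μ₁ x).const_mul w
  have h2 := (gaussian_hasDerivAt hσ μ₂ x).const_mul (1 - w)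
  have h := h1.add h2
  have hpos : 0 < w * gaussian μ₁ σ x + (1 - w) * gaussian μ₂ σ x := by
    have := gaussian_pos hσ μ₁ x; have := gaussian_pos hσ μ₂ x
    have : 0 < 1 - w := by linarith
    positivity
  exact (h.log hpos.ne').deriv

lemma score_diff_bound {σ : ℝ} (hσ : 0 < σ) (μ₁ μ₂ w δ : ℝ) (hμ : μ₁ < μ₂)
    (hw0 : 0 < w) (hw1 : w < 1) (hδ : 0 < δ) {x : ℝ} (hx : x ≤ (μ₁ + μ₂) / 2 - δ) :
    |score (fun y => w * gaussian μ₁ σ y + (1 - w) * gaussian μ₂ σ y) x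
      - score (fun y => gaussian μ₁ σ y) x|
      ≤ (1 - w) * (μ₂ - μ₁) / w * (σ ^ 2)⁻¹ * Real.exp (-((μ₂ - μ₁) * δ) * (σ ^ 2)⁻¹) := by
  have hφ₁ := gaussian_pos hσ μ₁ x
  have hφ₂ := gaussian_pos hσ μ₂ x
  have hw1' : 0 < 1 - w := by linarith
  have hc : 0 < μ₂ - μ₁ := sub_pos.2 hμ
  have h2σ : (0:ℝ) < 2 * σ ^ 2 := by positivity
  have hp : 0 < w * gaussian μ₁ σ x + (1 - w) * gaussian μ₂ σ x := by positivity
  -- exponent inequality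
  have hexp : -(x - μ₂) ^ 2 / (2 * σ ^ 2) ≤
      -(x - μ₁) ^ 2 / (2 * σ ^ 2) + -((μ₂ - μ₁) * δ) * (σ ^ 2)⁻¹ := by
    have h1 : -(x - μ₂) ^ 2 / (2 * σ ^ 2) - -(x - μ₁) ^ 2 / (2 * σ ^ 2)
        ≤ -((μ₂ - μ₁) * δ) * (σ ^ 2)⁻¹ := by
      rw [div_sub_div_same, div_le_iff₀ h2σ]
      have heq : -((μ₂ - μ₁) * δ) * (σ ^ 2)⁻¹ * (2 * σ ^ 2) = -2 * ((μ₂ - μ₁) * δ) := by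
        field_simp
      rw [heq]
      nlinarith [mul_nonneg hc.le (show (0:ℝ) ≤ -(2 * x - μ₁ - μ₂ + 2 * δ) by linarith)]
    linarith
  have key : gaussian μ₂ σ x ≤ gaussian μ₁ σ x * Real.exp (-((μ₂ - μ₁) * δ) * (σ ^ 2)⁻¹) := by
    unfold gaussian
    rw [mul_assoc, ← Real.exp_add]
    have hA : (0:ℝ) ≤ (σ * Real.sqrt (2 * Real.pi))⁻¹ := by
      have : 0 < Real.sqrt (2 * Real.pi) := Real.sqrt_pos.2 (by positivity)
      positivity
    exact mul_le_mul_of_nonneg_left (Real.exp_le_exp.2 hexp) hA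
  have hdiff : score (fun y => w * gaussian μ₁ σ y + (1 - w) * gaussian μ₂ σ y) x
      - score (fun y => gaussian μ₁ σ y) x
      = (1 - w) * gaussian μ₂ σ x * ((μ₂ - μ₁) / σ ^ 2)
        / (w * gaussian μ₁ σ x + (1 - w) * gaussian μ₂ σ x) := by
    rw [score_mix hσ μ₁ μ₂ w x hw0 hw1, score_gaussian hσ μ₁ x]
    field_simp
    ring
  rw [hdiff, abs_of_nonneg (by positivity)]
  calc (1 - w) * gaussian μ₂ σ x * ((μ₂ - μ₁) / σ ^ 2)
        / (w * gaussian μ₁ σ x + (1 - w) * gaussian μ₂ σ x)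
      ≤ (1 - w) * (gaussian μ₁ σ x * Real.exp (-((μ₂ - μ₁) * δ) * (σ ^ 2)⁻¹))
          * ((μ₂ - μ₁) / σ ^ 2) / (w * gaussian μ₁ σ x) := by
        gcongr
        · nlinarith
    _ = (1 - w) * (μ₂ - μ₁) / w * (σ ^ 2)⁻¹ * Real.exp (-((μ₂ - μ₁) * δ) * (σ ^ 2)⁻¹) := by
        field_simp

/-- uniform convergence of the mixture score to the score of the left
component on a half-line strictly left of the midpoint, as `σ → 0⁺`. -/
theorem mixture_score_uniform_convergence_small_variance (μ₁ μ₂ w δ : ℝ)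
    (hμ : μ₁ < μ₂) (hw : w ∈ Set.Ioo (0 : ℝ) 1) (hδ : 0 < δ) :
    Tendsto
      (fun σ => sSup {r : ℝ | ∃ x ≤ (μ₁ + μ₂) / 2 - δ,
        r = |score (fun y => w * gaussian μ₁ σ y + (1 - w) * gaussian μ₂ σ y) x
              - score (fun y => gaussian μ₁ σ y) x|})
      (nhdsWithin 0 (Set.Ioi 0)) (nhds 0) := by
  obtain ⟨hw0, hw1⟩ := hw
  have hc : 0 < μ₂ - μ₁ := sub_pos.2 hμ
  have hw1' : 0 < 1 - w := by linarith
  set K : ℝ := (1 - w) * (μ₂ - μ₁) / w with hK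
  have hK0 : 0 < K := by positivity
  set B : ℝ → ℝ := fun σ => K * (σ ^ 2)⁻¹ * Real.exp (-((μ₂ - μ₁) * δ) * (σ ^ 2)⁻¹) with hBdef
  have hB : Tendsto B (nhdsWithin 0 (Set.Ioi 0)) (nhds 0) := by
    have ht : Tendsto (fun σ : ℝ => (σ ^ 2)⁻¹) (nhdsWithin 0 (Set.Ioi 0)) atTop := by
      have h1 : Tendsto (fun σ : ℝ => σ⁻¹) (nhdsWithin 0 (Set.Ioi 0)) atTop :=
        tendsto_inv_nhdsGT_zero
      have h2 : Tendsto (fun t : ℝ => t ^ 2) atTop atTop :=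
        tendsto_pow_atTop two_ne_zero
      exact (h2.comp h1).congr fun σ => by simp [inv_pow]
    have ha : 0 < (μ₂ - μ₁) * δ := by positivity
    have h3 : Tendsto (fun u : ℝ => u * Real.exp (-u)) atTop (nhds 0) := by
      simpa using Real.tendsto_pow_mul_exp_neg_atTop_nhds_zero 1
    have h4 : Tendsto (fun t : ℝ => (μ₂ - μ₁) * δ * t) atTop atTop :=
      Tendsto.const_mul_atTop ha tendsto_id
    have h5 := (h3.comp h4).const_mul (K / ((μ₂ - μ₁) * δ))
    rw [mul_zero] at h5
    have hgoal : Tendsto (fun t : ℝ => K * t * Real.exp (-((μ₂ - μ₁) * δ) * t))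
        atTop (nhds 0) := by
      refine h5.congr fun t => ?_
      simp only [Function.comp_apply]
      rw [neg_mul]
      field_simp
    exact hgoal.comp ht
  refine squeeze_zero' ?_ ?_ hB
  · filter_upwards [self_mem_nhdsWithin] with σ hσ
    have hσ' : 0 < σ := hσ
    have hbdd : BddAbove {r : ℝ | ∃ x ≤ (μ₁ + μ₂) / 2 - δ,
        r = |score (fun y => w * gaussian μ₁ σ y + (1 - w) * gaussian μ₂ σ y) x
              - score (fun y => gaussian μ₁ σ y) x|} := by
      refine ⟨B σ, ?_⟩
      rintro r ⟨x, hx, rfl⟩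
      exact score_diff_bound hσ' μ₁ μ₂ w δ hμ hw0 hw1 hδ hx
    have hmem : |score (fun y => w * gaussian μ₁ σ y + (1 - w) * gaussian μ₂ σ y)
          ((μ₁ + μ₂) / 2 - δ)
        - score (fun y => gaussian μ₁ σ y) ((μ₁ + μ₂) / 2 - δ)| ∈
        {r : ℝ | ∃ x ≤ (μ₁ + μ₂) / 2 - δ,
        r = |score (fun y => w * gaussian μ₁ σ y + (1 - w) * gaussian μ₂ σ y) x
              - score (fun y => gaussian μ₁ σ y) x|} :=
      ⟨(μ₁ + μ₂) / 2 - δ, le_rfl, rfl⟩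
    exact le_trans (abs_nonneg _) (le_csSup hbdd hmem)
  · filter_upwards [self_mem_nhdsWithin] with σ hσ
    have hσ' : 0 < σ := hσ
    refine Real.sSup_le ?_ (by positivity)
    rintro r ⟨x, hx, rfl⟩
    exact score_diff_bound hσ' μ₁ μ₂ w δ hμ hw0 hw1 hδ hx
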